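/- arXiv:1006.5433 — 2 statements merged into one kernel-verified Lean document; each statement's English description precedes it below -/
import Mathlib

section
/- If w0 ≤ w1 (in the pawn-move partial order on words in {x,y} with equal letter counts), then for any creation operator a*_{s,i} (which inserts a letter s at a specified place relative to the i-th occurrence of s, including initial and final insertions), a*_{s,i} w0 ≤ a*_{s,i} w1; moreover the converse holds: a*_{s,i} w0 ≤ a*_{s,i} w1 implies w0 ≤ w1. -/
open scoped Classical

/-- Words over the two-letter alphabet {x,y}; `false` is `x`, `true` is `y`. -/
abbrev Word := List Bool

/-- 0-indexed positions of the x's (`false`) in a word. -/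
def xIdx (w : Word) : List ℕ :=
  (List.range w.length).filter (fun j => w.getD j true = false)

/-- 0-indexed positions of the y's (`true`) in a word. -/
def yIdx (w : Word) : List ℕ :=
  (List.range w.length).filter (fun j => w.getD j false = true)

/-- `fX w i` = number of y's strictly left of the i-th x of `w` (i is 0-indexed). -/
def fX (w : Word) (i : ℕ) : ℕ := (xIdx w).getD i 0 - i

/-- `fY w j` = number of x's strictly left of the j-th y of `w` (j is 0-indexed). -/
def fY (w : Word) (j : ℕ) : ℕ := (yIdx w).getD j 0 - j

/-- `hX w i` = (1-indexed) position of the i-th x of `w` (i is 0-indexed). -/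
def hX (w : Word) (i : ℕ) : ℕ := (xIdx w).getD i 0 + 1

/-- The pawn-move partial order: same letter counts, and each x of `w0` lies at a
position at most that of the corresponding x of `w1`. -/
def wle (w0 w1 : Word) : Prop :=
  w0.count false = w1.count false ∧ w0.count true = w1.count true ∧
  ∀ i < w0.count false, (xIdx w0).getD i 0 ≤ (xIdx w1).getD i 0

/-- Creation operator `a*_{s,i}` on words: `i = 0` prepends `s`; `1 ≤ i ≤ n_s`
replaces the i-th `s` by `ss`; `i = n_s + 1` appends `s`. -/
def create (s : Bool) : ℕ → Word → Word
  | 0, w => s :: w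
  | _+1, [] => [s]
  | i+1, a :: w =>
    if a = s then (if i = 0 then s :: s :: w else a :: create s i w)
    else a :: create s (i+1) w

/-- Delete the i-th occurrence (1-indexed) of `s`. -/
def delNth (s : Bool) : ℕ → Word → Word
  | _, [] => []
  | i, a :: w => if a = s then (if i ≤ 1 then w else a :: delNth s (i-1) w)
                 else a :: delNth s i w

/-- Annihilation operator `a_{s,i}` on words: `i = 0` deletes an initial `s` (else 0);
`1 ≤ i ≤ n_s` deletes the i-th `s`; `i = n_s + 1` deletes a final `s` (else 0). -/
def annih (s : Bool) (i : ℕ) (w : Word) : Option Word :=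
  if i = 0 then
    match w with
    | a :: t => if a = s then some t else none
    | [] => none
  else if i ≤ w.count s then some (delNth s i w)
  else if i = w.count s + 1 then
    if w.getLast? = some s then some w.dropLast else none
  else none

/-- The free ℤ-module on words: the Fock space `F`. -/
abbrev FS := Word →₀ ℤ

/-- Basis vector of a word. -/
noncomputable def δ (w : Word) : FS := Finsupp.single w 1

/-- `0` for `none`, basis vector for `some`. -/
noncomputable def optδ (o : Option Word) : FS := o.elim 0 δ

/-- Extend a word-indexed family of vectors to a linear map on `FS`. -/
noncomputable def opOf (g : Word → FS) : FS →ₗ[ℤ] FS := Finsupp.lift FS ℤ Word g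

/-- Creation operator as a linear map. -/
noncomputable def Cr (s : Bool) (i : ℕ) : FS →ₗ[ℤ] FS := opOf (fun w => δ (create s i w))

/-- Annihilation operator as a linear map. -/
noncomputable def An (s : Bool) (i : ℕ) : FS →ₗ[ℤ] FS := opOf (fun w => optδ (annih s i w))

/-- Boolean bilinear form on words: `1` if `w0 ≤ w1` in the pawn-move order, else `0`. -/
noncomputable def pairW (w0 w1 : Word) : ℤ := if wle w0 w1 then 1 else 0

/-- Bilinear extension of `pairW` to the free module. -/
noncomputable def pairF (u v : FS) : ℤ :=
  u.sum fun w0 a => v.sum fun w1 b => a * b * pairW w0 w1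

/-- Kronecker delta form on words. -/
noncomputable def dotW (w0 w1 : Word) : ℤ := if w0 = w1 then 1 else 0

/-- Bilinear extension of `dotW`: words form an orthonormal basis. -/
noncomputable def dotF (u v : FS) : ℤ :=
  u.sum fun w0 a => v.sum fun w1 b => a * b * dotW w0 w1

/-- All words of a given length. -/
noncomputable def wordsOfLen (n : ℕ) : Finset Word :=
  (Finset.univ : Finset (Fin n → Bool)).image List.ofFn

/-- Swap `xy → yx` at the x's whose (0-indexed) number lies in `T`;
the counter `k` records how many x's have been passed. -/
def psiX (T : Finset ℕ) : Word → ℕ → Word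
  | [], _ => []
  | false :: true :: w, k =>
      if k ∈ T then true :: false :: psiX T w (k+1)
      else false :: psiX T (true :: w) (k+1)
  | false :: w, k => false :: psiX T w (k+1)
  | true :: w, k => true :: psiX T w k
  termination_by w _ => w.length
  decreasing_by all_goals (simp <;> omega)

/-- Swap `yx → xy` at the y's whose (0-indexed) number lies in `T`. -/
def psiY (T : Finset ℕ) : Word → ℕ → Word
  | [], _ => []
  | true :: false :: w, k =>
      if k ∈ T then false :: true :: psiY T w (k+1)
      else true :: psiY T (false :: w) (k+1)
  | true :: w, k => true :: psiY T w (k+1)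
  | false :: w, k => false :: psiY T w k
  termination_by w _ => w.length
  decreasing_by all_goals (simp <;> omega)

/-- `Ex w`: 0-indexed numbers of the x's of `w` immediately followed by a y. -/
noncomputable def Ex (w : Word) : Finset ℕ :=
  (Finset.range (w.count false)).filter
    (fun i => w.getD ((xIdx w).getD i 0 + 1) false = true)

/-- `Ey w`: 0-indexed numbers of the y's of `w` immediately followed by an x. -/
noncomputable def Ey (w : Word) : Finset ℕ :=
  (Finset.range (w.count true)).filter
    (fun i => w.getD ((yIdx w).getD i 0 + 1) true = false)
namespace Stmt2Aux

def pos (s : Bool) : Word → List ℕ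
  | [] => []
  | a :: w => if a = s then 0 :: (pos s w).map (·+1) else (pos s w).map (·+1)

theorem length_pos (s : Bool) (w : Word) : (pos s w).length = w.count s := by
  induction w with
  | nil => simp [pos]
  | cons a w ih =>
    by_cases h : a = s <;> simp [pos, h, List.count_cons, ih]

theorem xIdx_eq (w : Word) : xIdx w = pos false w := by
  induction w with
  | nil => simp [xIdx, pos]
  | cons a w ih =>
    unfold xIdx pos
    rw [List.length_cons, List.range_succ_eq_map, List.filter_cons, List.filter_map]
    have h1 : (fun j => decide ((a :: w).getD j true = false)) ∘ Nat.succ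
        = fun j => decide (w.getD j true = false) := by
      funext j; simp [List.getD_cons_succ]
    rw [h1]
    cases a <;> simp [← ih, xIdx, Nat.succ_eq_add_one]
theorem getD_map_succ (l : List ℕ) (k : ℕ) (hk : k < l.length) :
    (l.map (·+1)).getD k 0 = l.getD k 0 + 1 := by
  rw [List.getD_eq_getElem _ _ (by simpa using hk), List.getD_eq_getElem _ _ hk,
    List.getElem_map]

theorem pos_cons_self (s : Bool) (w : Word) :
    pos s (s :: w) = 0 :: (pos s w).map (·+1) := by simp [pos]

theorem pos_cons_ne (s a : Bool) (w : Word) (h : ¬ a = s) :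
    pos s (a :: w) = (pos s w).map (·+1) := by simp [pos, h]

theorem char (s : Bool) (w : Word) (k p : ℕ) (hk : k < w.count s) :
    (pos s w).getD k 0 < p ↔ k + 1 ≤ (w.take p).count s := by
  induction w generalizing k p with
  | nil => simp at hk
  | cons a w ih =>
    by_cases h : a = s
    · subst h
      rw [List.count_cons_self] at hk
      rw [pos_cons_self]
      cases k with
      | zero =>
        rw [List.getD_cons_zero]
        cases p with
        | zero => simp
        | succ q => simp [List.count_cons_self]
      | succ k =>
        have hk' : k < w.count a := by omega
        rw [List.getD_cons_succ]
        rw [getD_map_succ _ _ (by rw [length_pos]; exact hk')]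
        cases p with
        | zero => simp
        | succ q =>
          rw [List.take_succ_cons, List.count_cons_self]
          have := ih k q hk'
          omega
    · have hc : (a :: w).count s = w.count s := by
        rw [List.count_cons_of_ne (by simpa using h)]
      rw [hc] at hk
      rw [pos_cons_ne _ _ _ h]
      rw [getD_map_succ _ _ (by rw [length_pos]; exact hk)]
      cases p with
      | zero => simp
      | succ q =>
        rw [List.take_succ_cons, List.count_cons_of_ne (by simpa using h)]
        have := ih k q hk
        omega

theorem pos_lt (s : Bool) (w : Word) (k : ℕ) (hk : k < w.count s) :
    (pos s w).getD k 0 < w.length :=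
  (char s w k w.length hk).mpr (by rw [List.take_length]; omega)

theorem count_take_mono (c : Bool) (w : Word) {p q : ℕ} (h : p ≤ q) :
    (w.take p).count c ≤ (w.take q).count c := by
  have : w.take p = (w.take q).take p := by rw [List.take_take, min_eq_left h]
  rw [this]
  exact (List.take_sublist _ _).count_le c

theorem count_take_step (c : Bool) (w : Word) (p : ℕ) :
    (w.take (p+1)).count c ≤ (w.take p).count c + 1 := by
  rw [List.take_succ, List.count_append]
  have : (w[p]?.toList).count c ≤ 1 := by
    cases h : w[p]? with
    | none => simp
    | some b => by_cases hb : b = c <;> simp [hb, List.count_cons]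
  omega

theorem count_tf (w : Word) : w.count true + w.count false = w.length := by
  induction w with
  | nil => simp
  | cons a w ih => cases a <;> simp [List.count_cons] <;> omega
def T (s : Bool) : ℕ → Word → ℕ
  | 0, _ => 0
  | _+1, [] => 0
  | i+1, a :: w => if a = s then (if i = 0 then 1 else T s i w + 1) else T s (i+1) w + 1

theorem create_eq (s : Bool) (i : ℕ) (w : Word) :
    create s i w = w.take (T s i w) ++ s :: w.drop (T s i w) := by
  induction w generalizing i with
  | nil => cases i <;> simp [create, T]
  | cons a w ih =>
    cases i with
    | zero => simp [create, T]
    | succ j =>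
      by_cases h : a = s
      · subst h
        by_cases hj : j = 0
        · simp [create, T, hj]
        · simp only [create, T, if_pos rfl, if_neg hj, if_true]
          rw [List.take_succ_cons, List.drop_succ_cons, ih]
          simp
      · simp only [create, T, if_neg h]
        rw [List.take_succ_cons, List.drop_succ_cons, ih]
        simp [h]

theorem count_create (s c : Bool) (i : ℕ) (w : Word) :
    (create s i w).count c = w.count c + (if c = s then 1 else 0) := by
  rw [create_eq, List.count_append, List.count_cons]
  have : w.count c = (w.take (T s i w)).count c + (w.drop (T s i w)).count c := by
    rw [← List.count_append, List.take_append_drop]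
  by_cases h : c = s
  · subst h; simp; omega
  · simp [h, Ne.symm h]; omega

theorem T_mid (s : Bool) (i : ℕ) (w : Word) (h1 : 1 ≤ i) (h2 : i ≤ w.count s) :
    T s i w = (pos s w).getD (i-1) 0 + 1 := by
  induction w generalizing i with
  | nil => simp at h2; omega
  | cons a w ih =>
    cases i with
    | zero => omega
    | succ j =>
      by_cases h : a = s
      · subst h
        rw [List.count_cons_self] at h2
        by_cases hj : j = 0
        · simp [T, hj, pos_cons_self]
        · obtain ⟨j', rfl⟩ : ∃ j', j = j'+1 := ⟨j-1, by omega⟩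
          simp only [T, if_pos rfl, if_neg hj, if_true, Nat.add_sub_cancel]
          rw [pos_cons_self, List.getD_cons_succ,
            getD_map_succ _ _ (by rw [length_pos]; omega)]
          have hI := ih (j'+1) (by omega) (by omega)
          simp only [Nat.add_sub_cancel] at hI
          omega
      · rw [List.count_cons_of_ne (by simpa using h)] at h2
        simp only [T, if_neg h, Nat.add_sub_cancel]
        rw [pos_cons_ne _ _ _ h, getD_map_succ _ _ (by rw [length_pos]; omega)]
        have hI := ih (j+1) (by omega) h2
        simp only [Nat.add_sub_cancel] at hI
        omega

theorem T_top (s : Bool) (w : Word) : T s (w.count s + 1) w = w.length := by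
  induction w with
  | nil => simp [T]
  | cons a w ih =>
    by_cases h : a = s
    · subst h
      rw [List.count_cons_self]
      simp only [T, if_pos rfl, if_neg (by omega : ¬ w.count a + 1 = 0), if_true]
      rw [ih]; simp
    · rw [List.count_cons_of_ne (by simpa using h)]
      simp only [T, if_neg h]
      rw [ih]; simp

theorem T_le (s : Bool) (i : ℕ) (w : Word) (h : i ≤ w.count s + 1) :
    T s i w ≤ w.length := by
  rcases Nat.eq_zero_or_pos i with h0 | h0
  · subst h0; show T s 0 w ≤ _; simp [T]
  rcases Nat.lt_or_ge (w.count s) i with h2 | h2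
  · have : i = w.count s + 1 := by omega
    rw [this, T_top]
  · rw [T_mid s i w h0 h2]
    have := pos_lt s w (i-1) (by omega)
    omega

theorem key (s : Bool) (i : ℕ) (w : Word) (h1 : 1 ≤ i) (h2 : i ≤ w.count s) (q : ℕ) :
    i ≤ (w.take q).count s ↔ T s i w ≤ q := by
  rw [T_mid s i w h1 h2]
  have := char s w (i-1) q (by omega)
  omega

theorem T_zero (s : Bool) (w : Word) : T s 0 w = 0 := by
  cases w <;> rfl
theorem count_take_insert (s c : Bool) (t : ℕ) (w : Word) (ht : t ≤ w.length) (p : ℕ) :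
    ((w.take t ++ s :: w.drop t).take p).count c =
      if p ≤ t then (w.take p).count c
      else (w.take (p-1)).count c + (if c = s then 1 else 0) := by
  have hlt : (w.take t).length = t := by rw [List.length_take]; omega
  rw [List.take_append, List.take_take, hlt]
  by_cases hp : p ≤ t
  · rw [if_pos hp, min_eq_left hp, Nat.sub_eq_zero_of_le hp]
    simp
  · rw [if_neg hp, min_eq_right (by omega)]
    obtain ⟨q, rfl⟩ : ∃ q, p = t + (q + 1) := ⟨p - t - 1, by omega⟩
    have h1 : t + (q+1) - t = q + 1 := by omega
    have h2 : t + (q+1) - 1 = t + q := by omega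
    rw [h1, h2, List.take_succ_cons, List.count_append, List.count_cons]
    have h3 : w.take (t + q) = w.take t ++ (w.drop t).take q := by
      rw [← List.take_add]  -- take t w ++ take q (drop t w) = take (t+q) w ?
    rw [h3, List.count_append]
    by_cases h : c = s
    · subst h; simp; omega
    · simp [h, Ne.symm h]

theorem wle_iff (w0 w1 : Word) :
    wle w0 w1 ↔ (w0.count false = w1.count false ∧ w0.count true = w1.count true ∧
      ∀ p, (w1.take p).count false ≤ (w0.take p).count false) := by
  unfold wle
  rw [xIdx_eq, xIdx_eq]
  refine and_congr_right fun hcf => and_congr_right fun hct => ⟨fun hord p => ?_, fun hN i hi => ?_⟩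
  · by_contra hcon
    push_neg at hcon
    set k := (w0.take p).count false with hk
    have hk1 : k < w1.count false := lt_of_lt_of_le hcon
      ((List.take_sublist _ _).count_le false)
    have hg1 : (pos false w1).getD k 0 < p := (char false w1 k p hk1).mpr hcon
    have hg0 : (pos false w0).getD k 0 < p :=
      lt_of_le_of_lt (hord k (by omega)) hg1
    have := (char false w0 k p (by omega)).mp hg0
    omega
  · by_contra hcon
    push_neg at hcon
    set p := (pos false w1).getD i 0 + 1 with hp
    have h1 : i + 1 ≤ (w1.take p).count false :=
      (char false w1 i p (by omega)).mp (by omega)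
    have h2 := le_trans h1 (hN p)
    have := (char false w0 i p hi).mpr h2
    omega
theorem main (s : Bool) (i : ℕ) (w0 w1 : Word)
    (h0 : i ≤ w0.count s + 1) (h1 : i ≤ w1.count s + 1)
    (hcf : w0.count false = w1.count false) (hct : w0.count true = w1.count true) :
    (∀ p, (w1.take p).count false ≤ (w0.take p).count false) ↔
    (∀ p, ((create s i w1).take p).count false ≤ ((create s i w0).take p).count false) := by
  have hL : w0.length = w1.length := by
    have := count_tf w0; have := count_tf w1; omega
  cases s with
  | false =>
    have hcs : w0.count false = w1.count false := hcf
    set t0 := T false i w0 with hdt0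
    set t1 := T false i w1 with hdt1
    have keycase : t0 = t1 ∨ (1 ≤ i ∧ i ≤ w0.count false ∧ i ≤ w1.count false) := by
      rcases Nat.eq_zero_or_pos i with hz | hpos
      · left; subst hz; rw [hdt0, hdt1, T_zero, T_zero]
      rcases le_or_gt i (w0.count false) with hle | hgt
      · right; exact ⟨hpos, hle, by omega⟩
      · left
        have e0 : i = w0.count false + 1 := by omega
        rw [hdt0, hdt1, e0, T_top, hcs, T_top, hL]
    have E0 : ∀ p, ((create false i w0).take p).count false =
        if p ≤ t0 then (w0.take p).count false else (w0.take (p-1)).count false + 1 := by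
      intro p
      rw [create_eq, count_take_insert false false _ w0 (T_le _ _ _ h0) p]
      simp
      rfl
    have E1 : ∀ p, ((create false i w1).take p).count false =
        if p ≤ t1 then (w1.take p).count false else (w1.take (p-1)).count false + 1 := by
      intro p
      rw [create_eq, count_take_insert false false _ w1 (T_le _ _ _ h1) p]
      simp
      rfl
    constructor
    · intro hN p
      have ht01 : t0 ≤ t1 := by
        rcases keycase with he | ⟨hi1, hi0, hi2⟩
        · omega
        · exact (key false i w0 hi1 hi0 t1).mp
            (le_trans ((key false i w1 hi1 hi2 t1).mpr le_rfl) (hN t1))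
      rw [E0 p, E1 p]
      rcases le_or_gt p t0 with hp0 | hp0 <;> rcases le_or_gt p t1 with hp1 | hp1
      · rw [if_pos hp0, if_pos hp1]; exact hN p
      · omega
      · rw [if_pos hp1, if_neg (show ¬ p ≤ t0 by omega)]
        obtain ⟨q, rfl⟩ : ∃ q, p = q + 1 := ⟨p - 1, by omega⟩
        simp only [Nat.add_sub_cancel]
        have := count_take_step false w1 q
        have := hN q
        omega
      · rw [if_neg (show ¬ p ≤ t1 by omega), if_neg (show ¬ p ≤ t0 by omega)]
        have := hN (p-1)
        omega
    · intro hN' p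
      have hN'' : ∀ q, (if q ≤ t1 then (w1.take q).count false
            else (w1.take (q-1)).count false + 1) ≤
          (if q ≤ t0 then (w0.take q).count false
            else (w0.take (q-1)).count false + 1) := by
        intro q; rw [← E0 q, ← E1 q]; exact hN' q
      rcases le_or_gt p t0 with hp0 | hp0 <;> rcases le_or_gt p t1 with hp1 | hp1
      · have h := hN'' p
        rw [if_pos hp0, if_pos hp1] at h; exact h
      · -- t1 < p ≤ t0 : generic
        have h := hN'' p
        rw [if_pos hp0, if_neg (show ¬ p ≤ t1 by omega)] at h
        obtain ⟨q, rfl⟩ : ∃ q, p = q + 1 := ⟨p - 1, by omega⟩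
        simp only [Nat.add_sub_cancel] at h
        have := count_take_step false w1 q
        omega
      · -- t0 < p ≤ t1 : needs key
        rcases keycase with he | ⟨hi1, hi0, hi2⟩
        · omega
        have hB : i ≤ (w0.take p).count false :=
          (key false i w0 hi1 hi0 p).mpr (by omega)
        have hA : ¬ i ≤ (w1.take (p-1)).count false := by
          intro h
          have := (key false i w1 hi1 hi2 (p-1)).mp h
          omega
        obtain ⟨q, rfl⟩ : ∃ q, p = q + 1 := ⟨p - 1, by omega⟩
        simp only [Nat.add_sub_cancel] at hA
        have := count_take_step false w1 q
        omega
      · have h := hN'' (p+1)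
        rw [if_neg (show ¬ p+1 ≤ t1 by omega), if_neg (show ¬ p+1 ≤ t0 by omega)] at h
        simp only [Nat.add_sub_cancel] at h
        omega
  | true =>
    have hcs : w0.count true = w1.count true := hct
    set t0 := T true i w0 with hdt0
    set t1 := T true i w1 with hdt1
    have keycase : t0 = t1 ∨ (1 ≤ i ∧ i ≤ w0.count true ∧ i ≤ w1.count true) := by
      rcases Nat.eq_zero_or_pos i with hz | hpos
      · left; subst hz; rw [hdt0, hdt1, T_zero, T_zero]
      rcases le_or_gt i (w0.count true) with hle | hgt
      · right; exact ⟨hpos, hle, by omega⟩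
      · left
        have e0 : i = w0.count true + 1 := by omega
        rw [hdt0, hdt1, e0, T_top, hcs, T_top, hL]
    have E0 : ∀ p, ((create true i w0).take p).count false =
        if p ≤ t0 then (w0.take p).count false else (w0.take (p-1)).count false := by
      intro p
      rw [create_eq, count_take_insert true false _ w0 (T_le _ _ _ h0) p]
      simp
      rfl
    have E1 : ∀ p, ((create true i w1).take p).count false =
        if p ≤ t1 then (w1.take p).count false else (w1.take (p-1)).count false := by
      intro p
      rw [create_eq, count_take_insert true false _ w1 (T_le _ _ _ h1) p]
      simp
      rfl
    have tf0 : ∀ q, (w0.take q).count true + (w0.take q).count false = min q w0.length := by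
      intro q; rw [← List.length_take]; exact count_tf _
    have tf1 : ∀ q, (w1.take q).count true + (w1.take q).count false = min q w1.length := by
      intro q; rw [← List.length_take]; exact count_tf _
    constructor
    · intro hN p
      have ht10 : t1 ≤ t0 := by
        rcases keycase with he | ⟨hi1, hi0, hi2⟩
        · omega
        refine (key true i w1 hi1 hi2 t0).mp ?_
        have hM0 : i ≤ (w0.take t0).count true := (key true i w0 hi1 hi0 t0).mpr le_rfl
        have := hN t0; have := tf0 t0; have := tf1 t0
        omega
      rw [E0 p, E1 p]
      rcases le_or_gt p t0 with hp0 | hp0 <;> rcases le_or_gt p t1 with hp1 | hp1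
      · rw [if_pos hp0, if_pos hp1]; exact hN p
      · rw [if_neg (show ¬ p ≤ t1 by omega), if_pos hp0]
        have := hN (p-1)
        have := count_take_mono false w0 (Nat.sub_le p 1)
        omega
      · omega
      · rw [if_neg (show ¬ p ≤ t1 by omega), if_neg (show ¬ p ≤ t0 by omega)]
        exact hN (p-1)
    · intro hN' p
      have hN'' : ∀ q, (if q ≤ t1 then (w1.take q).count false
            else (w1.take (q-1)).count false) ≤
          (if q ≤ t0 then (w0.take q).count false
            else (w0.take (q-1)).count false) := by
        intro q; rw [← E0 q, ← E1 q]; exact hN' q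
      rcases le_or_gt p t0 with hp0 | hp0 <;> rcases le_or_gt p t1 with hp1 | hp1
      · have h := hN'' p
        rw [if_pos hp0, if_pos hp1] at h; exact h
      · -- t1 < p ≤ t0 : needs key (via true-counts)
        rcases keycase with he | ⟨hi1, hi0, hi2⟩
        · omega
        have hB : i ≤ (w1.take p).count true :=
          (key true i w1 hi1 hi2 p).mpr (by omega)
        have hA : ¬ i ≤ (w0.take (p-1)).count true := by
          intro h
          have := (key true i w0 hi1 hi0 (p-1)).mp h
          omega
        obtain ⟨q, rfl⟩ : ∃ q, p = q + 1 := ⟨p - 1, by omega⟩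
        simp only [Nat.add_sub_cancel] at hA
        have := count_take_step true w0 q
        have := tf0 (q+1); have := tf1 (q+1); have := tf0 q
        have hlen : min (q+1) w0.length = min (q+1) w1.length := by rw [hL]
        omega
      · -- t0 < p ≤ t1 : generic via p+1
        have h := hN'' (p+1)
        rw [if_neg (show ¬ p+1 ≤ t0 by omega)] at h
        simp only [Nat.add_sub_cancel] at h
        by_cases hpt : p + 1 ≤ t1
        · rw [if_pos hpt] at h
          have := count_take_mono false w1 (show p ≤ p+1 by omega)
          omega
        · rw [if_neg hpt] at h
          exact h
      · have h := hN'' (p+1)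
        rw [if_neg (show ¬ p+1 ≤ t1 by omega), if_neg (show ¬ p+1 ≤ t0 by omega)] at h
        simp only [Nat.add_sub_cancel] at h
        exact h
end Stmt2Aux

open Stmt2Aux in
/-- Creation operators preserve the pawn-move order, and conversely:
for a valid index `i`, `w0 ≤ w1` iff `a*_{s,i} w0 ≤ a*_{s,i} w1`. -/
theorem stmt2 (s : Bool) (i : ℕ) (w0 w1 : Word)
    (h0 : i ≤ w0.count s + 1) (h1 : i ≤ w1.count s + 1) :
    wle w0 w1 ↔ wle (create s i w0) (create s i w1) := by
  rw [wle_iff, wle_iff]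
  have a0 := count_create s false i w0
  have a1 := count_create s false i w1
  have b0 := count_create s true i w0
  have b1 := count_create s true i w1
  constructor
  · rintro ⟨hcf, hct, hN⟩
    refine ⟨by rw [a0, a1, hcf], by rw [b0, b1, hct],
      (main s i w0 w1 h0 h1 hcf hct).mp hN⟩
  · rintro ⟨hcf, hct, hN⟩
    rw [a0, a1] at hcf
    rw [b0, b1] at hct
    have hcf' : w0.count false = w1.count false := by omega
    have hct' : w0.count true = w1.count true := by omega
    exact ⟨hcf', hct', (main s i w0 w1 h0 h1 hcf' hct').mpr hN⟩
end

section
/- For any two words w0, w1 over {x,y} with the same number of x's and the same number of y's, there exist decompositions w0 = w0^0 w0^1 ⋯ w0^{2k-1} and w1 = w1^0 w1^1 ⋯ w1^{2k-1} such that for each index i the subwords w0^i and w1^i have the same number of each symbol, w0^i ≤ w1^i when i is even, and w1^i ≤ w0^i when i is odd. -/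
open scoped Classical

lemma xIdx_cons (a : Bool) (w : Word) :
    xIdx (a :: w) = (if a = false then [0] else []) ++ (xIdx w).map (· + 1) := by
  unfold xIdx
  rw [List.length_cons, List.range_succ_eq_map, List.filter_cons]
  simp only [List.getD_cons_zero, List.getD_cons_succ]
  rw [List.filter_map]
  have h : ∀ l : List ℕ,
      l.filter ((fun j => decide ((a :: w).getD j true = false)) ∘ Nat.succ)
        = l.filter (fun j => decide (w.getD j true = false)) := by
    intro l
    apply List.filter_congr
    intro j _
    simp [Function.comp, List.getD_cons_succ]
  rcases a with _ | _ <;>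
    simp only [h, Nat.succ_eq_add_one] <;> simp [List.getD]

lemma xIdx_cons_false (w : Word) : xIdx (false :: w) = 0 :: (xIdx w).map (· + 1) := by
  rw [xIdx_cons]; simp

lemma xIdx_cons_true (w : Word) : xIdx (true :: w) = (xIdx w).map (· + 1) := by
  rw [xIdx_cons]; simp

lemma length_xIdx (w : Word) : (xIdx w).length = w.count false := by
  induction w with
  | nil => rfl
  | cons a w ih =>
    rw [xIdx_cons, List.length_append, List.length_map, ih, List.count_cons]
    rcases a with _ | _ <;> simp <;> omega

lemma count_false_add_count_true (w : Word) : w.count false + w.count true = w.length := by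
  induction w with
  | nil => rfl
  | cons a w ih => rcases a with _ | _ <;> simp [List.count_cons] <;> omega

lemma getD_map_succ (l : List ℕ) (i : ℕ) (hi : i < l.length) :
    (l.map (· + 1)).getD i 0 = l.getD i 0 + 1 := by
  rw [List.getD_eq_getElem?_getD, List.getD_eq_getElem?_getD, List.getElem?_map,
    List.getElem?_eq_getElem hi]
  rfl

lemma key (w : Word) : ∀ i t : ℕ, i < w.count false →
    ((xIdx w).getD i 0 < t ↔ i < (w.take t).count false) := by
  induction w with
  | nil => intro i t hi; simp at hi
  | cons a w ih =>
    intro i t hi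
    rcases a with _ | _
    · -- a = false
      rw [xIdx_cons_false]
      rcases i with _ | i
      · rcases t with _ | s
        · simp
        · simpa using Nat.succ_pos _
      · have hi' : i < w.count false := by
          have := hi; rw [List.count_cons] at this; simp at this; omega
        rw [List.getD_cons_succ, getD_map_succ _ _ (by rw [length_xIdx]; exact hi')]
        rcases t with _ | s
        · simp
        · rw [List.take_succ_cons, List.count_cons]
          have := ih i s hi'
          constructor
          · intro h; have := this.mp (by omega); simp; omega
          · intro h; have h2 : i < (w.take s).count false := by simp at h; omega
            have := this.mpr h2; omega
    · -- a = true
      rw [xIdx_cons_true]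
      have hi' : i < w.count false := by
        have := hi; rw [List.count_cons] at this; simpa using this
      rw [getD_map_succ _ _ (by rw [length_xIdx]; exact hi')]
      rcases t with _ | s
      · simp
      · rw [List.take_succ_cons, List.count_cons]
        have := ih i s hi'
        constructor
        · intro h; have := this.mp (by omega); simp; omega
        · intro h; have h2 : i < (w.take s).count false := by simp at h; omega
          have := this.mpr h2; omega

lemma wle_of_dom (u v : Word) (h1 : u.count false = v.count false)
    (h2 : u.count true = v.count true)
    (hdom : ∀ t, (v.take t).count false ≤ (u.take t).count false) : wle u v := by
  refine ⟨h1, h2, fun i hi => ?_⟩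
  have hi' : i < v.count false := h1 ▸ hi
  have h3 := (key v i ((xIdx v).getD i 0 + 1) hi').mp (Nat.lt_succ_self _)
  have h4 : i < (u.take ((xIdx v).getD i 0 + 1)).count false := lt_of_lt_of_le h3 (hdom _)
  exact Nat.lt_succ_iff.mp ((key u i _ hi).mpr h4)

lemma wle_nil : wle [] [] := ⟨rfl, rfl, by simp [List.count_nil]⟩

lemma ivt (f : ℕ → ℤ) (hstep : ∀ n, f (n+1) ≤ f n + 1) (a b : ℕ) (hab : a ≤ b)
    (ha : f a < 0) (hb : 0 ≤ f b) : ∃ c, a ≤ c ∧ c ≤ b ∧ f c = 0 := by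
  have hex : ∃ t, a ≤ t ∧ 0 ≤ f t := ⟨b, hab, hb⟩
  classical
  obtain ⟨hac, hfc⟩ := Nat.find_spec hex
  have hcb : Nat.find hex ≤ b := Nat.find_min' hex ⟨hab, hb⟩
  have hca : a < Nat.find hex := by
    rcases lt_or_eq_of_le hac with h | h
    · exact h
    · rw [← h] at hfc; omega
  obtain ⟨m, hm1⟩ : ∃ m, Nat.find hex = m + 1 := ⟨Nat.find hex - 1, by omega⟩
  have hm := Nat.find_min hex (show m < Nat.find hex by omega)
  have hfm : f m < 0 := by by_contra h; exact hm ⟨by omega, by omega⟩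
  have h1 := hstep m
  rw [hm1] at hfc
  exact ⟨m + 1, by omega, by omega, by omega⟩

lemma count_take_succ (w : Word) (t : ℕ) :
    (w.take (t+1)).count false ≤ (w.take t).count false + 1 ∧
    (w.take t).count false ≤ (w.take (t+1)).count false := by
  rw [List.take_succ, List.count_append]
  have : (w[t]?.toList).count false ≤ 1 := by
    rcases h : w[t]? with _ | b
    · simp
    · rcases b with _ | _ <;> simp
  omega

lemma main : ∀ (n : ℕ) (w0 w1 : Word), w0.length ≤ n →
    w0.count false = w1.count false → w0.count true = w1.count true →
    ∃ (k : ℕ) (p0 p1 : List Word),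
      p0.length = 2 * k ∧ p1.length = 2 * k ∧
      p0.flatten = w0 ∧ p1.flatten = w1 ∧
      ∀ i < 2 * k,
        if i % 2 = 0 then wle (p0.getD i []) (p1.getD i [])
        else wle (p1.getD i []) (p0.getD i []) := by
  intro n
  induction n with
  | zero =>
    intro w0 w1 hlen hx hy
    have h0 : w0 = [] := List.length_eq_zero_iff.mp (Nat.le_zero.mp hlen)
    subst h0
    have hc0 := count_false_add_count_true w1
    simp [List.count_nil] at hx hy
    have h1 : w1 = [] := List.length_eq_zero_iff.mp (by omega)
    subst h1
    exact ⟨0, [], [], rfl, rfl, rfl, rfl, by intro i hi; omega⟩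
  | succ n ih =>
    intro w0 w1 hlen hx hy
    by_cases h0 : w0 = []
    · subst h0; exact ih [] w1 (by simp) hx hy
    · have hN : 1 ≤ w0.length := List.length_pos_iff.mpr h0
      have hlen1 : w1.length = w0.length := by
        have h1 := count_false_add_count_true w0
        have h2 := count_false_add_count_true w1
        omega
      have hex : ∃ t, 1 ≤ t ∧ (w0.take t).count false = (w1.take t).count false := by
        refine ⟨w0.length, hN, ?_⟩
        rw [List.take_length, List.take_of_length_le (le_of_eq hlen1)]
        exact hx
      classical
      obtain ⟨hp1, hpeq⟩ := Nat.find_spec hex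
      set p := Nat.find hex with hpdef
      have hpN : p ≤ w0.length := Nat.find_min' hex ⟨hN, by
        rw [List.take_length, List.take_of_length_le (le_of_eq hlen1)]; exact hx⟩
      set f : ℕ → ℤ := fun t => ((w0.take t).count false : ℤ) - (w1.take t).count false
        with hfdef
      have hmin : ∀ t, 1 ≤ t → t < p → f t ≠ 0 := by
        intro t h1t htp hft
        have : ¬ (1 ≤ t ∧ (w0.take t).count false = (w1.take t).count false) :=
          Nat.find_min hex htp
        simp only [hfdef] at hft
        exact this ⟨h1t, by omega⟩
      have hstep : ∀ t, f (t+1) ≤ f t + 1 := by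
        intro t
        have h1 := count_take_succ w0 t
        have h2 := count_take_succ w1 t
        simp only [hfdef]
        omega
      have hstep2 : ∀ t, -f (t+1) ≤ -f t + 1 := by
        intro t
        have h1 := count_take_succ w0 t
        have h2 := count_take_succ w1 t
        simp only [hfdef]
        omega
      have hdir : (∀ t ≤ p, 0 ≤ f t) ∨ (∀ t ≤ p, f t ≤ 0) := by
        by_contra h
        push_neg at h
        obtain ⟨⟨t1, ht1p, ht1⟩, ⟨t2, ht2p, ht2⟩⟩ := h
        rcases le_total t1 t2 with h12 | h21
        · obtain ⟨c, hc1, hc2, hc3⟩ := ivt f hstep t1 t2 h12 ht1 (le_of_lt ht2)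
          have hne2 : c ≠ t2 := by intro h; rw [h] at hc3; omega
          have hne1 : c ≠ t1 := by intro h; rw [h] at hc3; omega
          exact hmin c (by omega) (by omega) hc3
        · have hg2 : -f t2 < 0 := by omega
          have hg1 : (0:ℤ) ≤ -f t1 := by omega
          obtain ⟨c, hc1, hc2, hc3⟩ := ivt (fun t => -f t) hstep2 t2 t1 h21 hg2 hg1
          have hc3' : f c = 0 := neg_eq_zero.mp hc3
          have hne2 : c ≠ t1 := by intro h; rw [h] at hc3'; omega
          have hne1 : c ≠ t2 := by intro h; rw [h] at hc3'; omega
          exact hmin c (by omega) (by omega) hc3'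
      -- common facts
      have hlt : (w0.take p).length = p := by
        rw [List.length_take]; omega
      have hlt1 : (w1.take p).length = p := by
        rw [List.length_take]; omega
      have hcuy : (w0.take p).count true = (w1.take p).count true := by
        have h1 := count_false_add_count_true (w0.take p)
        have h2 := count_false_add_count_true (w1.take p)
        omega
      have e0x : (w0.take p).count false + (w0.drop p).count false = w0.count false := by
        rw [← List.count_append, List.take_append_drop]
      have e1x : (w1.take p).count false + (w1.drop p).count false = w1.count false := by
        rw [← List.count_append, List.take_append_drop]
      have e0y : (w0.take p).count true + (w0.drop p).count true = w0.count true := by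
        rw [← List.count_append, List.take_append_drop]
      have e1y : (w1.take p).count true + (w1.drop p).count true = w1.count true := by
        rw [← List.count_append, List.take_append_drop]
      have hdx : (w0.drop p).count false = (w1.drop p).count false := by omega
      have hdy : (w0.drop p).count true = (w1.drop p).count true := by omega
      have hdl : (w0.drop p).length ≤ n := by
        rw [List.length_drop]; omega
      obtain ⟨k, p0', p1', hl0, hl1, hj0, hj1, hcond⟩ := ih (w0.drop p) (w1.drop p) hdl hdx hdy
      rcases hdir with hA | hB
      · -- w0 dominates: wle (take p w0) (take p w1)
        have hwle : wle (w0.take p) (w1.take p) := by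
          apply wle_of_dom _ _ hpeq hcuy
          intro t
          rw [List.take_take, List.take_take]
          have := hA (min t p) (min_le_right _ _)
          simp only [hfdef] at this
          omega
        refine ⟨k + 1, w0.take p :: [] :: p0', w1.take p :: [] :: p1', ?_, ?_, ?_, ?_, ?_⟩
        · simp [hl0]; ring
        · simp [hl1]; ring
        · simp [hj0, List.take_append_drop]
        · simp [hj1, List.take_append_drop]
        · intro i hi
          match i with
          | 0 => simpa using hwle
          | 1 => simpa using wle_nil
          | (j+2) =>
            have hmod : (j+2) % 2 = j % 2 := by omega
            have := hcond j (by omega)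
            simp only [List.getD_cons_succ, hmod]
            exact this
      · -- w1 dominates: wle (take p w1) (take p w0)
        have hwle : wle (w1.take p) (w0.take p) := by
          apply wle_of_dom _ _ hpeq.symm hcuy.symm
          intro t
          rw [List.take_take, List.take_take]
          have := hB (min t p) (min_le_right _ _)
          simp only [hfdef] at this
          omega
        refine ⟨k + 1, [] :: w0.take p :: p0', [] :: w1.take p :: p1', ?_, ?_, ?_, ?_, ?_⟩
        · simp [hl0]; ring
        · simp [hl1]; ring
        · simp [hj0, List.take_append_drop]
        · simp [hj1, List.take_append_drop]
        · intro i hi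
          match i with
          | 0 => simpa using wle_nil
          | 1 => simpa using hwle
          | (j+2) =>
            have hmod : (j+2) % 2 = j % 2 := by omega
            have := hcond j (by omega)
            simp only [List.getD_cons_succ, hmod]
            exact this

/-- Any two words with equal letter counts admit decompositions into
`2k` corresponding subwords with equal letter counts, alternately comparable:
`w0^i ≤ w1^i` for even `i` and `w1^i ≤ w0^i` for odd `i`. -/
theorem stmt4 (w0 w1 : Word)
    (hx : w0.count false = w1.count false)
    (hy : w0.count true = w1.count true) :
    ∃ (k : ℕ) (p0 p1 : List Word),
      p0.length = 2 * k ∧ p1.length = 2 * k ∧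
      p0.flatten = w0 ∧ p1.flatten = w1 ∧
      ∀ i < 2 * k,
        if i % 2 = 0 then wle (p0.getD i []) (p1.getD i [])
        else wle (p1.getD i []) (p0.getD i []) := by
  exact main w0.length w0 w1 le_rfl hx hy
end
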